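/- Rank-metric Singleton bound: if C is an F_{q^m}-linear subspace of (F_{q^m})^n of dimension k ≥ 1 in which every nonzero vector has rank at least d (where 1 ≤ d ≤ min{n,m}), then mk ≤ max{n,m}(min{n,m} − d + 1). -/

import Mathlib

open Submodule

/-- The rank of a vector `v ∈ L^n`: the `Fq`-dimension of the `Fq`-span of its entries. -/
noncomputable def rkVec (Fq : Type*) {L : Type*} [Field Fq] [Field L] [Algebra Fq L]
    {n : ℕ} (v : Fin n → L) : ℕ :=
  Module.finrank Fq ↥(Submodule.span Fq (Set.range v))

/-- The rank-metric lattice `L_i(n,m;q)`: subspaces of `L^n` spanned by their vectors of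
rank at most `i`. -/
def RML (Fq L : Type*) [Field Fq] [Field L] [Algebra Fq L] (n i : ℕ) :
    Set (Submodule L (Fin n → L)) :=
  {X | X = Submodule.span L {x | x ∈ X ∧ rkVec Fq x ≤ i}}

/-- The meet in the rank-metric lattice: span of the rank-`≤ i` vectors of the intersection. -/
def rmlMeet (Fq : Type*) {L : Type*} [Field Fq] [Field L] [Algebra Fq L] {n : ℕ} (i : ℕ)
    (X Y : Submodule L (Fin n → L)) : Submodule L (Fin n → L) :=
  Submodule.span L {x | x ∈ X ⊓ Y ∧ rkVec Fq x ≤ i}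

/-- `X` is a modular element of the rank-metric lattice `L_i`. -/
def IsModularElt (Fq : Type*) {L : Type*} [Field Fq] [Field L] [Algebra Fq L] {n : ℕ} (i : ℕ)
    (X : Submodule L (Fin n → L)) : Prop :=
  ∀ Y ∈ RML Fq L n i,
    Module.finrank L ↥(rmlMeet Fq i X Y) + Module.finrank L ↥(X ⊔ Y)
      = Module.finrank L ↥X + Module.finrank L ↥Y

/-- If every entry of `v` lies in the `Fq`-span of `r` vectors, then `rkVec v ≤ r`. -/
lemma rk_le_aux (Fq : Type*) {L : Type*} [Field Fq] [Field L] [Algebra Fq L]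
    [FiniteDimensional Fq L] {n r : ℕ} (v : Fin n → L) (w : Fin r → L)
    (h : ∀ j, v j ∈ Submodule.span Fq (Set.range w)) : rkVec Fq v ≤ r := by
  have h1 : Submodule.span Fq (Set.range v) ≤ Submodule.span Fq (Set.range w) :=
    Submodule.span_le.mpr (by rintro x ⟨j, rfl⟩; exact h j)
  refine le_trans (Submodule.finrank_mono h1) ?_
  simpa [Set.finrank] using finrank_range_le_card (R := Fq) w

theorem rank_metric_singleton_bound (q m n k d : ℕ) (hq : IsPrimePow q) (hn : 2 ≤ n)
    (hm : 2 ≤ m) (Fq L : Type) [Field Fq] [Field L] [Algebra Fq L] [Fintype Fq]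
    (hcard : Fintype.card Fq = q) (hdim : Module.finrank Fq L = m)
    (C : Submodule L (Fin n → L)) (hk : Module.finrank L ↥C = k) (hk1 : 1 ≤ k)
    (hd1 : 1 ≤ d) (hd2 : d ≤ min n m)
    (hmin : ∀ v ∈ C, v ≠ 0 → d ≤ rkVec Fq v) :
    m * k ≤ max n m * (min n m - d + 1) := by
  have hdn : d ≤ n := le_trans hd2 (min_le_left _ _)
  have hdm : d ≤ m := le_trans hd2 (min_le_right _ _)
  haveI : FiniteDimensional Fq L := Module.finite_of_finrank_pos (by omega)
  -- every nonzero element of C has nonzero rank at least d; helper for injectivity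
  have key : ∀ v : Fin n → L, v ∈ C → rkVec Fq v ≤ d - 1 → v = 0 := by
    intro v hv hle
    by_contra hne
    have := hmin v hv hne
    omega
  rcases le_or_gt n m with hcase | hcase
  · -- n ≤ m : puncture d-1 coordinates, L-linearly
    have hr : n - d + 1 ≤ n := by omega
    set φ : ↥C →ₗ[L] (Fin (n - d + 1) → L) :=
      { toFun := fun v j => (v : Fin n → L) (Fin.castLE hr j)
        map_add' := by intros; ext j; simp
        map_smul' := by intros; ext j; simp }
    have hinj : Function.Injective φ := by
      rw [← LinearMap.ker_eq_bot, LinearMap.ker_eq_bot']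
      intro v hv0
      have hz : ∀ j : Fin (n - d + 1), (v : Fin n → L) (Fin.castLE hr j) = 0 := by
        intro j; exact congrFun hv0 j
      set w : Fin (d - 1) → L := fun i => (v : Fin n → L) ⟨n - d + 1 + i.val, by omega⟩ with hw
      have hmem : ∀ j : Fin n, (v : Fin n → L) j ∈ Submodule.span Fq (Set.range w) := by
        intro j
        rcases lt_or_ge j.val (n - d + 1) with hj | hj
        · have : (v : Fin n → L) j = 0 := by
            have := hz ⟨j.val, hj⟩
            simpa [Fin.castLE] using this
          rw [this]; exact Submodule.zero_mem _
        · refine Submodule.subset_span ⟨⟨j.val - (n - d + 1), by omega⟩, ?_⟩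
          simp only [hw]
          exact congrArg _ (Fin.ext (by simp only [Fin.val_mk]; omega))
      have : rkVec Fq (v : Fin n → L) ≤ d - 1 := rk_le_aux Fq _ w hmem
      have := key v v.2 this
      exact Subtype.ext this
    have hle : k ≤ n - d + 1 := by
      rw [← hk]
      calc Module.finrank L ↥C ≤ Module.finrank L (Fin (n - d + 1) → L) :=
            LinearMap.finrank_le_finrank_of_injective hinj
        _ = n - d + 1 := by simp
    have hmax : max n m = m := max_eq_right hcase
    have hmin' : min n m = n := min_eq_left hcase
    rw [hmax, hmin']
    exact Nat.mul_le_mul_left m hle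
  · -- m < n : project onto m - d + 1 coordinates of an Fq-basis of L
    obtain ⟨b⟩ : Nonempty (Module.Basis (Fin m) Fq L) := ⟨Module.finBasisOfFinrankEq Fq L hdim⟩
    have hr : m - d + 1 ≤ m := by omega
    set ψ : ↥C →ₗ[Fq] (Fin n → Fin (m - d + 1) → Fq) :=
      { toFun := fun v j i => b.repr ((v : Fin n → L) j) (Fin.castLE hr i)
        map_add' := by intros; ext j i; simp
        map_smul' := by
          intro c x
          ext j i
          have h1 : ((c • x : ↥C) : Fin n → L) = c • (x : Fin n → L) :=
            Submodule.coe_smul_of_tower c x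
          simp [h1, map_smul] }
    have hinj : Function.Injective ψ := by
      rw [← LinearMap.ker_eq_bot, LinearMap.ker_eq_bot']
      intro v hv0
      have hz : ∀ (j : Fin n) (i : Fin (m - d + 1)),
          b.repr ((v : Fin n → L) j) (Fin.castLE hr i) = 0 := by
        intro j i; exact congrFun (congrFun hv0 j) i
      set w : Fin (d - 1) → L := fun i => b ⟨m - d + 1 + i.val, by omega⟩ with hw
      have hmem : ∀ j : Fin n, (v : Fin n → L) j ∈ Submodule.span Fq (Set.range w) := by
        intro j
        have hsupp : ↑(b.repr ((v : Fin n → L) j)).support ⊆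
            {i : Fin m | m - d + 1 ≤ i.val} := by
          intro i hi
          simp only [Finset.mem_coe, Finsupp.mem_support_iff] at hi
          by_contra hlt
          simp only [Set.mem_setOf_eq, not_le] at hlt
          exact hi (by simpa [Fin.castLE] using hz j ⟨i.val, hlt⟩)
        have h1 : (v : Fin n → L) j ∈
            Submodule.span Fq (b '' {i : Fin m | m - d + 1 ≤ i.val}) :=
          b.mem_span_image.mpr hsupp
        refine Submodule.span_le.mpr ?_ h1
        rintro x ⟨i, hi, rfl⟩
        simp only [Set.mem_setOf_eq] at hi
        have hilt := i.isLt
        refine Submodule.subset_span ⟨⟨i.val - (m - d + 1), by omega⟩, ?_⟩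
        simp only [hw]
        exact congrArg _ (Fin.ext (by simp only [Fin.val_mk]; omega))
      have : rkVec Fq (v : Fin n → L) ≤ d - 1 := rk_le_aux Fq _ w hmem
      have := key v v.2 this
      exact Subtype.ext this
    have hCfin : Module.finrank Fq ↥C = m * k := by
      rw [← hdim, ← hk]
      exact (Module.finrank_mul_finrank Fq L ↥C).symm
    have hle : m * k ≤ n * (m - d + 1) := by
      rw [← hCfin]
      calc Module.finrank Fq ↥C
          ≤ Module.finrank Fq (Fin n → Fin (m - d + 1) → Fq) :=
            LinearMap.finrank_le_finrank_of_injective hinj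
        _ = n * (m - d + 1) := by
            rw [Module.finrank_pi_fintype]
            simp [Finset.sum_const, Module.finrank_fintype_fun_eq_card]
    have hmax : max n m = n := max_eq_left hcase.le
    have hmin' : min n m = m := min_eq_right hcase.le
    rw [hmax, hmin']
    exact hle
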